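/- Let 𝒜 = ⊕_{k≥0} 𝒜^k be a ℤ-graded Poisson superalgebra whose Poisson bracket {·,·} has degree −2 (so {𝒜^a, 𝒜^b} ⊂ 𝒜^{a+b−2}) and is graded antisymmetric with parity given by degree, satisfying the graded Jacobi identity. Let Ψ ∈ 𝒜^3 be odd. For X, Y ∈ 𝒜^1 define X∘Y = {{X,Ψ},Y} and for f ∈ 𝒜^0 define ρ(X)(f) = {{X,Ψ},f}, and ⟨X,Y⟩ = {X,Y}. Then the derived bracket satisfies the Courant compatibility identities ρ(X)⟨Y,Y⟩ = 2⟨X, Y∘Y⟩ and ⟨X∘Y, Y⟩ = (1/2)ρ(X)⟨Y,Y⟩ for all X, Y ∈ 𝒜^1, without any assumption on {Ψ,Ψ}. -/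
import Mathlib


/-- In an ℕ-graded Poisson superalgebra `𝒜 = ⊕_{k≥0} 𝒜^k` whose
bracket has degree `−2`, is graded antisymmetric and satisfies the graded
Jacobi identity, given an odd element `Ψ ∈ 𝒜³`, the derived bracket
`X∘Y = {{X,Ψ},Y}` together with `ρ(X)(f) = {{X,Ψ},f}` and `⟨X,Y⟩ = {X,Y}`
satisfies the Courant compatibility identities
`ρ(X)⟨Y,Y⟩ = 2⟨X, Y∘Y⟩` and `⟨X∘Y, Y⟩ = (1/2)ρ(X)⟨Y,Y⟩`
for all `X, Y ∈ 𝒜¹`, without any assumption on `{Ψ,Ψ}`. -/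
theorem derived_bracket_courant_compatibility
    {A : Type*} [AddCommGroup A] [Module ℝ A]
    (G : ℕ → Submodule ℝ A)                   -- the grading 𝒜^k
    (P : A → A → A)                            -- the Poisson bracket {·,·}
    (hbilL : ∀ y : A, IsLinearMap ℝ (fun x => P x y))
    (hbilR : ∀ x : A, IsLinearMap ℝ (P x))
    (hdeg : ∀ (a b : ℕ) (x y : A), x ∈ G a → y ∈ G b → P x y ∈ G (a + b - 2))
    (hlow : ∀ (a b : ℕ) (x y : A), a + b < 2 → x ∈ G a → y ∈ G b → P x y = 0)
    (hanti : ∀ (a b : ℕ) (x y : A), x ∈ G a → y ∈ G b →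
      P x y = -(((-1 : ℝ) ^ (a * b)) • P y x))
    (hjac : ∀ (a b : ℕ) (x y z : A), x ∈ G a → y ∈ G b →
      P x (P y z) = P (P x y) z + ((-1 : ℝ) ^ (a * b)) • P y (P x z))
    (Ψ : A) (hΨ : Ψ ∈ G 3) :
    ∀ X ∈ G 1, ∀ Y ∈ G 1,
      P (P X Ψ) (P Y Y) = (2 : ℝ) • P X (P (P Y Ψ) Y) ∧
      P (P (P X Ψ) Y) Y = (1 / 2 : ℝ) • P (P X Ψ) (P Y Y) := by
  intro X hX Y hY
  -- degrees
  have hXΨ : P X Ψ ∈ G 2 := by simpa using hdeg 1 3 X Ψ hX hΨ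
  have hYΨ : P Y Ψ ∈ G 2 := by simpa using hdeg 1 3 Y Ψ hY hΨ
  have hf : P X Y ∈ G 0 := by simpa using hdeg 1 1 X Y hX hY
  have hW : P (P X Ψ) Y ∈ G 1 := by simpa using hdeg 2 1 _ _ hXΨ hY
  -- {f,Y} = 0 for degree reasons (0+1 < 2)
  have hfY : P (P X Y) Y = 0 := hlow 0 1 _ _ (by norm_num) hf hY
  -- antisymmetry facts
  have e2 : P Y (P (P X Ψ) Y) = P (P (P X Ψ) Y) Y := by
    have h := hanti 1 1 (P (P X Ψ) Y) Y hW hY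
    simpa using h.symm
  have e5 : P Y (P X Ψ) = -P (P X Ψ) Y := by
    have h := hanti 1 2 Y (P X Ψ) hY hXΨ
    simpa using h
  have eΨY : P Ψ Y = P Y Ψ := by
    have h := hanti 3 1 Ψ Y hΨ hY
    rw [h]; norm_num
  have efYΨ : P (P X Y) (P Y Ψ) = -P (P Y Ψ) (P X Y) := by
    have h := hanti 0 2 (P X Y) (P Y Ψ) hf hYΨ
    simpa using h
  -- key cancellation: {{f,Ψ},Y} + {{Y,Ψ},f} = 0 where f = {X,Y}
  have e6 : P (P (P X Y) Ψ) Y + P (P Y Ψ) (P X Y) = 0 := by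
    have h := hjac 0 3 (P X Y) Ψ Y hf hΨ
    rw [eΨY, hfY, (hbilR Ψ).map_zero, efYΨ] at h
    simp only [pow_zero, one_smul, smul_zero, add_zero] at h
    rw [← h]; abel
  -- first Jacobi: {{X,Ψ},{Y,Y}} = 2 {{{X,Ψ},Y},Y}
  have e1 : P (P X Ψ) (P Y Y) =
      P (P (P X Ψ) Y) Y + P (P (P X Ψ) Y) Y := by
    have h := hjac 2 1 (P X Ψ) Y Y hXΨ hY
    rw [e2] at h
    have s21 : ((-1:ℝ) ^ (2*1)) = 1 := by norm_num
    rw [s21, one_smul] at h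
    exact h
  -- second Jacobi chain: {X,{{Y,Ψ},Y}} = {{{X,Ψ},Y},Y}
  have e3 : P X (P (P Y Ψ) Y) = P (P (P X Ψ) Y) Y := by
    have h3 := hjac 1 2 X (P Y Ψ) Y hX hYΨ
    have h4 : P X (P Y Ψ) = P (P X Y) Ψ + P (P X Ψ) Y := by
      have h := hjac 1 1 X Y Ψ hX hY
      rw [e5] at h
      have s11 : ((-1:ℝ) ^ (1*1)) = -1 := by norm_num
      rw [s11] at h
      rw [h]; simp
    rw [h4] at h3
    have hL : P (P (P X Y) Ψ + P (P X Ψ) Y) Y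
        = P (P (P X Y) Ψ) Y + P (P (P X Ψ) Y) Y := (hbilL Y).map_add _ _
    rw [hL] at h3
    have s12 : ((-1:ℝ) ^ (1*2)) = 1 := by norm_num
    rw [s12, one_smul] at h3
    rw [h3, add_right_comm, e6, zero_add]
  constructor
  · rw [e3, e1, two_smul]
  · rw [e1, smul_add, ← add_smul]
    norm_num
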